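/- Fix α = (α_1 < α_2 < … < α_k) a strictly increasing sequence of nonnegative integers, and let L = {i ∈ [1,k-1] : α_i + 1 < α_{i+1}} = {ℓ_1 < … < ℓ_{t-1}}, with ℓ_0 = 0, ℓ_t = k, and A_i = [ℓ_{i-1}+1, ℓ_i]. Then for any injective tuple γ ∈ ℕ^k and permutation σ ∈ S_k, the following are equivalent: (1) the set {γ_1,…,γ_k} precedes or equals {α_1,…,α_k} in lexicographic order and γ_j - σ(j) = α_j - j for all j; (2) σ lies in the Young subgroup S_{A_1} × ⋯ × S_{A_t} and γ_j = α_{σ(j)} for all j. -/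

import Mathlib

lemma lyc_step {k : ℕ} {α : Fin k → ℕ} (hα : StrictMono α) :
    ∀ d : ℕ, ∀ i j : Fin k, (j : ℕ) = (i : ℕ) + d → α i + d ≤ α j := by
  intro d
  induction d with
  | zero =>
    intro i j h
    have : i = j := Fin.ext (by omega)
    simp [this]
  | succ d ih =>
    intro i j h
    have hlt : (i : ℕ) + d < k := by omega
    have h1 := ih i ⟨(i : ℕ) + d, hlt⟩ rfl
    have h2 : α ⟨(i : ℕ) + d, hlt⟩ < α j := hα (by simp [Fin.lt_def]; omega)
    omega

lemma lyc_mono {k : ℕ} {α : Fin k → ℕ} (hα : StrictMono α) (i j : Fin k)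
    (h : (i : ℕ) ≤ (j : ℕ)) : α i + (j : ℕ) ≤ α j + (i : ℕ) := by
  have := lyc_step hα ((j : ℕ) - (i : ℕ)) i j (by omega)
  omega

lemma lyc_le_self {k : ℕ} {α : Fin k → ℕ} (hα : StrictMono α) (j : Fin k) :
    (j : ℕ) ≤ α j := by
  have h0 : 0 < k := j.pos
  have h := lyc_mono hα ⟨0, h0⟩ j (Nat.zero_le _)
  have hv : ((⟨0, h0⟩ : Fin k) : ℕ) = 0 := rfl
  omega

lemma lyc_const {k : ℕ} {α : Fin k → ℕ} :
    ∀ d : ℕ, ∀ a b : Fin k, (b : ℕ) = (a : ℕ) + d →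
      (∀ m : Fin k, ∀ hm : (m : ℕ) + 1 < k, (a : ℕ) ≤ (m : ℕ) → (m : ℕ) < (b : ℕ) →
        α ⟨(m : ℕ) + 1, hm⟩ = α m + 1) →
      α b + (a : ℕ) = α a + (b : ℕ) := by
  intro d
  induction d with
  | zero =>
    intro a b h _
    have : a = b := Fin.ext (by omega)
    simp [this]
  | succ d ih =>
    intro a b h hblk
    have hlt : (a : ℕ) + d < k := by omega
    have hv : ((⟨(a : ℕ) + d, hlt⟩ : Fin k) : ℕ) = (a : ℕ) + d := rfl
    have hb2 : (a : ℕ) + d + 1 < k := by omega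
    have hbeq : b = ⟨(a : ℕ) + d + 1, hb2⟩ := Fin.ext (show (b : ℕ) = (a : ℕ) + d + 1 by omega)
    have hv2 : ((⟨(a : ℕ) + d + 1, hb2⟩ : Fin k) : ℕ) = (a : ℕ) + d + 1 := rfl
    have h2 := ih a ⟨(a : ℕ) + d, hlt⟩ (by omega)
      (fun m hm hma hmb => hblk m hm hma (by omega))
    have h1 : α ⟨(a : ℕ) + d + 1, hb2⟩ = α ⟨(a : ℕ) + d, hlt⟩ + 1 :=
      hblk ⟨(a : ℕ) + d, hlt⟩ hb2 (by omega) (by omega)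
    rw [hbeq]
    omega



/-- Fix a strictly increasing sequence `α` of `k` nonnegative integers (0-indexed).
For an injective tuple `γ ∈ ℕ^k` and a permutation `σ ∈ S_k`, the following are
equivalent:
(1) the set `{γ_1,…,γ_k}` precedes or equals `{α_1,…,α_k}` lexicographically
(i.e. `∑ 2^{-γ_i} ≥ ∑ 2^{-α_i}`) and `γ_j - σ(j) = α_j - j` for all `j`;
(2) `σ` lies in the Young subgroup determined by the maximal gap-free blocks of `α`
(equivalently, for every `j` there is no index `m` with `min(j,σ(j)) ≤ m < max(j,σ(j))`
and `α_{m+1} > α_m + 1`), and `γ_j = α_{σ(j)}` for all `j`. -/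
theorem lex_young_characterization (k : ℕ) (α γ : Fin k → ℕ)
    (hα : StrictMono α) (hγ : Function.Injective γ) (σ : Equiv.Perm (Fin k)) :
    ((∑ i : Fin k, ((2 : ℚ)⁻¹) ^ (γ i) ≥ ∑ i : Fin k, ((2 : ℚ)⁻¹) ^ (α i)) ∧
      ∀ j : Fin k, (γ j : ℤ) - ((σ j : ℕ) : ℤ) = (α j : ℤ) - ((j : ℕ) : ℤ)) ↔
    ((∀ j : Fin k, ∀ m : Fin k, ∀ hm : (m : ℕ) + 1 < k,
        min (j : ℕ) ((σ j : ℕ)) ≤ (m : ℕ) → (m : ℕ) < max (j : ℕ) ((σ j : ℕ)) →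
          α ⟨(m : ℕ) + 1, hm⟩ = α m + 1) ∧
      ∀ j : Fin k, γ j = α (σ j)) := by
  classical
  have hle : ∀ j : Fin k, (j : ℕ) ≤ α j := lyc_le_self hα
  set c : Fin k → ℕ := fun i => α i - (i : ℕ) with hc
  have hcval : ∀ i : Fin k, c i = α i - (i : ℕ) := fun i => rfl
  have hcm : ∀ i j : Fin k, (i : ℕ) ≤ (j : ℕ) → c i ≤ c j := by
    intro i j h
    have h1 := lyc_mono hα i j h
    have h2 := hle i
    have h3 := hle j
    rw [hcval, hcval]
    omega
  have hanti : StrictAnti (fun n : ℕ => ((2 : ℚ)⁻¹) ^ n) :=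
    pow_right_strictAnti₀ (by norm_num) (by norm_num)
  set f : Fin k → ℚ := fun i => ((2 : ℚ)⁻¹) ^ (c i) with hf
  set g : Fin k → ℚ := fun i => ((2 : ℚ)⁻¹) ^ ((i : ℕ)) with hg
  have hmfg : Monovary f g := by
    intro i j hij
    have hji : (j : ℕ) < (i : ℕ) := hanti.lt_iff_gt.mp hij
    exact hanti.antitone (hcm j i hji.le)
  have hfgα : ∀ i : Fin k, f i * g i = ((2 : ℚ)⁻¹) ^ (α i) := by
    intro i
    rw [hf, hg, ← pow_add]
    congr 1
    rw [hcval]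
    have := hle i
    omega
  constructor
  · rintro ⟨hsum, heq⟩
    have hγeq : ∀ j : Fin k, γ j = c j + (σ j : ℕ) := by
      intro j
      have h1 := heq j
      have h2 := hle j
      rw [hcval]
      omega
    have hfgγ : ∀ i : Fin k, f i * g (σ i) = ((2 : ℚ)⁻¹) ^ (γ i) := by
      intro i
      rw [hf, hg, ← pow_add, hγeq i]
    have hsum1 : ∑ i : Fin k, f i • g (σ i) = ∑ i : Fin k, ((2 : ℚ)⁻¹) ^ (γ i) := by
      simp only [smul_eq_mul]
      exact Finset.sum_congr rfl (fun i _ => hfgγ i)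
    have hsum2 : ∑ i : Fin k, f i • g i = ∑ i : Fin k, ((2 : ℚ)⁻¹) ^ (α i) := by
      simp only [smul_eq_mul]
      exact Finset.sum_congr rfl (fun i _ => hfgα i)
    have hrearr : ∑ i : Fin k, f i • g (σ i) ≤ ∑ i : Fin k, f i • g i :=
      hmfg.sum_smul_comp_perm_le_sum_smul
    have heqsum : ∑ i : Fin k, f i • g (σ i) = ∑ i : Fin k, f i • g i := by
      refine le_antisymm hrearr ?_
      rw [hsum1, hsum2]
      exact hsum
    have hmono2 : Monovary f (g ∘ σ) :=
      (hmfg.sum_smul_comp_perm_eq_sum_smul_iff).mp heqsum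
    have hkey : ∀ i j : Fin k, c i < c j → (σ i : ℕ) < (σ j : ℕ) := by
      intro i j hcij
      by_contra hcon
      push_neg at hcon
      have hne : σ j ≠ σ i := by
        intro h
        have : j = i := σ.injective h
        subst this
        exact lt_irrefl _ hcij
      have hlt2 : (σ j : ℕ) < (σ i : ℕ) :=
        lt_of_le_of_ne hcon (fun h => hne (Fin.ext h))
      have hgg : (g ∘ σ) i < (g ∘ σ) j := hanti hlt2
      have hff : f i ≤ f j := hmono2 hgg
      have : c j ≤ c i := hanti.le_iff_ge.mp hff
      omega
    have hfix : ∀ j : Fin k, c (σ j) = c j := by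
      intro j
      rcases lt_trichotomy (c (σ j)) (c j) with hlt | heq2 | hgt
      · exfalso
        have hsub : Finset.Iic (σ j) ⊆ Finset.univ.filter (fun i => c i < c j) := by
          intro i hi
          simp only [Finset.mem_Iic] at hi
          simp only [Finset.mem_filter, Finset.mem_univ, true_and]
          exact lt_of_le_of_lt (hcm i (σ j) hi) hlt
        have hcard1 := Finset.card_le_card hsub
        rw [Fin.card_Iic] at hcard1
        have hcard2 : (Finset.univ.filter (fun i => c i < c j)).card ≤ (Finset.Iio (σ j)).card :=
          Finset.card_le_card_of_injOn (fun i => σ i)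
            (fun i hi => by
              simp only [Finset.mem_coe, Finset.mem_filter, Finset.mem_univ, true_and] at hi
              simp only [Finset.mem_coe, Finset.mem_Iio]
              exact Fin.lt_def.mpr (hkey i j hi))
            (fun a _ b _ hab => σ.injective hab)
        rw [Fin.card_Iio] at hcard2
        omega
      · exact heq2
      · exfalso
        have hsub : Finset.Ici (σ j) ⊆ Finset.univ.filter (fun i => c j < c i) := by
          intro i hi
          simp only [Finset.mem_Ici] at hi
          simp only [Finset.mem_filter, Finset.mem_univ, true_and]
          exact lt_of_lt_of_le hgt (hcm (σ j) i hi)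
        have hcard1 := Finset.card_le_card hsub
        rw [Fin.card_Ici] at hcard1
        have hcard2 : (Finset.univ.filter (fun i => c j < c i)).card ≤ (Finset.Ioi (σ j)).card :=
          Finset.card_le_card_of_injOn (fun i => σ i)
            (fun i hi => by
              simp only [Finset.mem_coe, Finset.mem_filter, Finset.mem_univ, true_and] at hi
              simp only [Finset.mem_coe, Finset.mem_Ioi]
              exact Fin.lt_def.mpr (hkey j i hi))
            (fun a _ b _ hab => σ.injective hab)
        rw [Fin.card_Ioi] at hcard2
        have := (σ j).isLt
        omega
    constructor
    · intro j m hm h1 h2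
      have hvm : ((⟨(m : ℕ) + 1, hm⟩ : Fin k) : ℕ) = (m : ℕ) + 1 := rfl
      have hstep : α m < α ⟨(m : ℕ) + 1, hm⟩ := hα (by simp [Fin.lt_def])
      have hcmid : c m ≤ c ⟨(m : ℕ) + 1, hm⟩ := hcm _ _ (by omega)
      have hcc : c m = c ⟨(m : ℕ) + 1, hm⟩ := by
        rcases le_total (j : ℕ) ((σ j : ℕ)) with h | h
        · have e1 : c j ≤ c m := hcm j m (by omega)
          have e3 : c ⟨(m : ℕ) + 1, hm⟩ ≤ c (σ j) := hcm _ _ (by omega)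
          have e4 := hfix j
          omega
        · have e1 : c (σ j) ≤ c m := hcm (σ j) m (by omega)
          have e3 : c ⟨(m : ℕ) + 1, hm⟩ ≤ c j := hcm _ _ (by omega)
          have e4 := hfix j
          omega
      have g1 := hle m
      have g2 := hle ⟨(m : ℕ) + 1, hm⟩
      rw [hcval, hcval] at hcc
      omega
    · intro j
      have h1 := hγeq j
      have h2 := hfix j
      have h3 := hle (σ j)
      simp only [hcval] at h1 h2
      omega
  · rintro ⟨hblk, hγeq⟩
    have hkey : ∀ j : Fin k, α (σ j) + (j : ℕ) = α j + ((σ j : ℕ)) := by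
      intro j
      rcases le_total (j : ℕ) ((σ j : ℕ)) with h | h
      · exact lyc_const ((σ j : ℕ) - (j : ℕ)) j (σ j) (by omega)
          (fun m hm hma hmb => hblk j m hm (by omega) (by omega))
      · have := lyc_const ((j : ℕ) - (σ j : ℕ)) (σ j) j (by omega)
          (fun m hm hma hmb => hblk j m hm (by omega) (by omega))
        omega
    constructor
    · have : ∑ i : Fin k, ((2 : ℚ)⁻¹) ^ (γ i) = ∑ i : Fin k, ((2 : ℚ)⁻¹) ^ (α i) := by
        rw [Finset.sum_congr rfl (fun i _ => by rw [hγeq i])]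
        exact Equiv.sum_comp σ (fun i => ((2 : ℚ)⁻¹) ^ (α i))
      exact this.ge
    · intro j
      have h1 := hkey j
      rw [hγeq j]
      push_cast
      omega
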